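/- arXiv:1805.07833 — 2 statements merged into one kernel-verified Lean document; each statement's English description precedes it below -/
import Mathlib

section
/- Let p ∈ ℕ, α > 0, a ∈ (0,∞)^p, b ≥ 0, and y ∈ ℝ^p. Define gᵢ(x) = x − aᵢ·log x + b·x for x > 0 and G(x) = Σ_{i=1}^p gᵢ(xᵢ) for x ∈ (0,∞)^p. Then the unique minimizer over x ∈ (0,∞)^p of ½‖x − y‖₂² + α·G(x) is the vector whose i-th coordinate equals ½[ −α(b+1) + yᵢ + √((α(b+1) − yᵢ)² + 4αaᵢ) ]; i.e. the proximal operator of the separable sum G is computed coordinatewise by the scalar proximal formula. -/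
open scoped BigOperators

/-- Separable proximal objective: `½ ‖x - y‖₂² + α * ∑ i, (x i - a i * log (x i) + b * x i)`. -/
noncomputable def sepProxObj {p : ℕ} (α b : ℝ) (a y : Fin p → ℝ) (x : Fin p → ℝ) : ℝ :=
  (1 / 2) * ∑ i, (x i - y i) ^ 2 + α * ∑ i, (x i - a i * Real.log (x i) + b * x i)

private lemma sp_pos {α b a y : ℝ} (hα : 0 < α) (_hb : 0 ≤ b) (ha : 0 < a) :
    0 < (1 / 2) * (-(α * (b + 1)) + y + Real.sqrt ((α * (b + 1) - y) ^ 2 + 4 * α * a)) := by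
  set c := α * (b + 1) - y with hc
  have h0 : (0:ℝ) ≤ c ^ 2 + 4 * α * a := by positivity
  have hr : Real.sqrt (c ^ 2 + 4 * α * a) ^ 2 = c ^ 2 + 4 * α * a := Real.sq_sqrt h0
  have hrn := Real.sqrt_nonneg (c ^ 2 + 4 * α * a)
  have h1 : c < Real.sqrt (c ^ 2 + 4 * α * a) := by nlinarith
  have h2 : -(α * (b + 1)) + y = -c := by rw [hc]; ring
  rw [h2]; linarith

private lemma sp_key {α b a y t : ℝ} (hα : 0 < α) (hb : 0 ≤ b) (ha : 0 < a) (ht : 0 < t) :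
    (1/2)*((1 / 2) * (-(α * (b + 1)) + y + Real.sqrt ((α * (b + 1) - y) ^ 2 + 4 * α * a)) - y)^2
      + α*((1 / 2) * (-(α * (b + 1)) + y + Real.sqrt ((α * (b + 1) - y) ^ 2 + 4 * α * a))
          - a*Real.log ((1 / 2) * (-(α * (b + 1)) + y + Real.sqrt ((α * (b + 1) - y) ^ 2 + 4 * α * a)))
          + b*((1 / 2) * (-(α * (b + 1)) + y + Real.sqrt ((α * (b + 1) - y) ^ 2 + 4 * α * a))))
      + (1/2)*(t - (1 / 2) * (-(α * (b + 1)) + y + Real.sqrt ((α * (b + 1) - y) ^ 2 + 4 * α * a)))^2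
    ≤ (1/2)*(t - y)^2 + α*(t - a*Real.log t + b*t) := by
  set s := (1 / 2) * (-(α * (b + 1)) + y + Real.sqrt ((α * (b + 1) - y) ^ 2 + 4 * α * a)) with hs
  have hsp : 0 < s := sp_pos hα hb ha
  set c := α * (b + 1) - y with hc
  have h0 : (0:ℝ) ≤ c ^ 2 + 4 * α * a := by positivity
  have hr : Real.sqrt (c ^ 2 + 4 * α * a) ^ 2 = c ^ 2 + 4 * α * a := Real.sq_sqrt h0
  have h2 : -(α * (b + 1)) + y = -c := by rw [hc]; ring
  have hquad : s ^ 2 + c * s = α * a := by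
    rw [hs, h2]; linear_combination hr / 4
  have hsc : 0 < s + c := by nlinarith
  have hlog : s * (Real.log t - Real.log s) ≤ t - s := by
    have h1 : Real.log t - Real.log s ≤ t / s - 1 := by
      rw [← Real.log_div ht.ne' hsp.ne']
      exact Real.log_le_sub_one_of_pos (by positivity)
    have h3 : s * (t / s - 1) = t - s := by field_simp
    nlinarith [mul_le_mul_of_nonneg_left h1 hsp.le]
  have hmul := mul_le_mul_of_nonneg_left hlog hsc.le
  have h4 : α * a * (Real.log t - Real.log s) = (s ^ 2 + c * s) * (Real.log t - Real.log s) := by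
    rw [hquad]
  have hct : c * t = (α * (b + 1) - y) * t := by rw [hc]
  have hcs : c * s = (α * (b + 1) - y) * s := by rw [hc]
  nlinarith [hmul, h4, hct, hcs]

/-- The proximal operator of the separable sum `G x = ∑ i, g i (x i)`, with
`g i x = x - a i * log x + b * x`, is computed coordinatewise: the unique minimizer over
the positive orthant of `½ ‖x - y‖₂² + α * G x` has `i`-th coordinate
`½ * (-(α * (b + 1)) + y i + √((α * (b + 1) - y i)² + 4 * α * a i))`. -/
theorem sepProx_coordinatewise {p : ℕ} (α b : ℝ) (a y : Fin p → ℝ)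
    (hα : 0 < α) (hb : 0 ≤ b) (ha : ∀ i, 0 < a i) :
    (∀ i, 0 < (1 / 2) * (-(α * (b + 1)) + y i +
        Real.sqrt ((α * (b + 1) - y i) ^ 2 + 4 * α * a i))) ∧
    IsMinOn (sepProxObj α b a y) {x : Fin p → ℝ | ∀ i, 0 < x i}
      (fun i => (1 / 2) * (-(α * (b + 1)) + y i +
        Real.sqrt ((α * (b + 1) - y i) ^ 2 + 4 * α * a i))) ∧
    ∀ z : Fin p → ℝ, (∀ i, 0 < z i) →
      IsMinOn (sepProxObj α b a y) {x : Fin p → ℝ | ∀ i, 0 < x i} z →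
      z = fun i => (1 / 2) * (-(α * (b + 1)) + y i +
        Real.sqrt ((α * (b + 1) - y i) ^ 2 + 4 * α * a i)) := by
  set s : Fin p → ℝ := fun i => (1 / 2) * (-(α * (b + 1)) + y i +
      Real.sqrt ((α * (b + 1) - y i) ^ 2 + 4 * α * a i)) with hsdef
  have hspos : ∀ i, 0 < s i := fun i => sp_pos hα hb (ha i)
  have obj_eq : ∀ x : Fin p → ℝ, sepProxObj α b a y x =
      ∑ i, ((1/2) * (x i - y i) ^ 2 + α * (x i - a i * Real.log (x i) + b * x i)) := by
    intro x
    rw [sepProxObj, Finset.mul_sum, Finset.mul_sum, ← Finset.sum_add_distrib]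
  -- key inequality with quadratic slack
  have key : ∀ x : Fin p → ℝ, (∀ i, 0 < x i) →
      sepProxObj α b a y s + ∑ i, (1/2) * (x i - s i) ^ 2 ≤ sepProxObj α b a y x := by
    intro x hx
    rw [obj_eq x, obj_eq s, ← Finset.sum_add_distrib]
    refine Finset.sum_le_sum fun i _ => ?_
    exact sp_key hα hb (ha i) (hx i)
  refine ⟨hspos, ?_, ?_⟩
  · intro x hx
    have := key x hx
    have hnn : (0:ℝ) ≤ ∑ i, (1/2) * (x i - s i) ^ 2 :=
      Finset.sum_nonneg fun i _ => by positivity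
    simpa using le_trans (by linarith) (le_refl (sepProxObj α b a y x))
  · intro z hz hmin
    have h1 := key z hz
    have h2 : sepProxObj α b a y z ≤ sepProxObj α b a y s := hmin hspos
    have hnn : ∑ i, (1/2) * (z i - s i) ^ 2 ≤ 0 := by linarith
    have hz0 : ∀ i ∈ Finset.univ, (1/2) * (z i - s i) ^ 2 = 0 := by
      have := Finset.sum_eq_zero_iff_of_nonneg (fun i _ => by positivity : ∀ i ∈ Finset.univ, (0:ℝ) ≤ (1/2) * (z i - s i) ^ 2)
      exact this.mp (le_antisymm hnn (Finset.sum_nonneg fun i _ => by positivity))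
    funext i
    have := hz0 i (Finset.mem_univ i)
    have : (z i - s i) ^ 2 = 0 := by linarith
    have := pow_eq_zero_iff (n := 2) (by norm_num) |>.mp this
    simp only [hsdef] at *
    linarith [sub_eq_zero.mp this]
end

section
/- For any p, q ∈ ℕ, a fixed cost matrix M ∈ ℝ^{p×q} and parameters ε > 0, γ > 0, the function G(P, θ₁, θ₂) = ⟨P, M⟩ + ε·Σ_{i,j} P_{ij}(log P_{ij} − 1) + γ·kl(P𝟙, θ₁) + γ·kl(Pᵀ𝟙, θ₂) is jointly convex in (P, θ₁, θ₂) on the domain of matrices P ∈ (0,∞)^{p×q} and vectors θ₁ ∈ (0,∞)^p, θ₂ ∈ (0,∞)^q. -/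
open scoped BigOperators

/-- Generalized Kullback–Leibler divergence on positive vectors:
`kl (x, y) = ∑ i, x i * log (x i / y i) + y i - x i`. -/
noncomputable def genKL {p : ℕ} (x y : Fin p → ℝ) : ℝ :=
  ∑ i, (x i * Real.log (x i / y i) + y i - x i)

/-- Unbalanced entropic OT functional:
`G (P, θ₁, θ₂) = ⟨P, M⟩ + ε ∑ P_{ij} (log P_{ij} - 1) + γ kl(P𝟙, θ₁) + γ kl(Pᵀ𝟙, θ₂)`. -/
noncomputable def unbalancedOT {p q : ℕ} (M : Matrix (Fin p) (Fin q) ℝ) (ε γ : ℝ)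
    (P : Matrix (Fin p) (Fin q) ℝ) (θ₁ : Fin p → ℝ) (θ₂ : Fin q → ℝ) : ℝ :=
  (∑ i, ∑ j, P i j * M i j)
    + ε * ∑ i, ∑ j, P i j * (Real.log (P i j) - 1)
    + γ * genKL (fun i => ∑ j, P i j) θ₁
    + γ * genKL (fun j => ∑ i, P i j) θ₂

lemma combo_pos {a b x y : ℝ} (ha : 0 ≤ a) (hb : 0 ≤ b) (hab : a + b = 1)
    (hx : 0 < x) (hy : 0 < y) : 0 < a * x + b * y := by
  rcases eq_or_lt_of_le ha with h | h
  · have hb1 : b = 1 := by linarith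
    simp [← h, hb1, hy]
  · have : 0 ≤ b * y := mul_nonneg hb hy.le
    nlinarith

lemma mul_log_combo {a b x y : ℝ} (ha : 0 ≤ a) (hb : 0 ≤ b) (hab : a + b = 1)
    (hx : 0 < x) (hy : 0 < y) :
    (a * x + b * y) * Real.log (a * x + b * y) ≤ a * (x * Real.log x) + b * (y * Real.log y) := by
  have := Real.convexOn_mul_log.2 (Set.mem_Ici.2 hx.le) (Set.mem_Ici.2 hy.le) ha hb hab
  simpa [smul_eq_mul] using this

lemma ent_pt {a b x y : ℝ} (ha : 0 ≤ a) (hb : 0 ≤ b) (hab : a + b = 1)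
    (hx : 0 < x) (hy : 0 < y) :
    (a * x + b * y) * (Real.log (a * x + b * y) - 1)
      ≤ a * (x * (Real.log x - 1)) + b * (y * (Real.log y - 1)) := by
  have := mul_log_combo ha hb hab hx hy
  nlinarith

lemma kl_pt {a b x1 x2 y1 y2 : ℝ} (ha : 0 ≤ a) (hb : 0 ≤ b) (hab : a + b = 1)
    (hx1 : 0 < x1) (hx2 : 0 < x2) (hy1 : 0 < y1) (hy2 : 0 < y2) :
    (a * x1 + b * x2) * Real.log ((a * x1 + b * x2) / (a * y1 + b * y2))
      ≤ a * (x1 * Real.log (x1 / y1)) + b * (x2 * Real.log (x2 / y2)) := by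
  set Y := a * y1 + b * y2 with hY
  have hYpos : 0 < Y := combo_pos ha hb hab hy1 hy2
  have key := mul_log_combo (a := a * y1 / Y) (b := b * y2 / Y) (x := x1 / y1) (y := x2 / y2)
    (by positivity) (by positivity)
    (by field_simp; exact hY.symm) (by positivity) (by positivity)
  have harg : a * y1 / Y * (x1 / y1) + b * y2 / Y * (x2 / y2) = (a * x1 + b * x2) / Y := by
    field_simp
  rw [harg] at key
  have key2 := mul_le_mul_of_nonneg_left key hYpos.le
  calc (a * x1 + b * x2) * Real.log ((a * x1 + b * x2) / Y)
      = Y * ((a * x1 + b * x2) / Y * Real.log ((a * x1 + b * x2) / Y)) := by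
        field_simp
    _ ≤ Y * (a * y1 / Y * (x1 / y1 * Real.log (x1 / y1))
          + b * y2 / Y * (x2 / y2 * Real.log (x2 / y2))) := key2
    _ = a * (x1 * Real.log (x1 / y1)) + b * (x2 * Real.log (x2 / y2)) := by
        field_simp

lemma kl_pt' {a b x1 x2 y1 y2 : ℝ} (ha : 0 ≤ a) (hb : 0 ≤ b) (hab : a + b = 1)
    (hx1 : 0 ≤ x1) (hx2 : 0 ≤ x2) (hy1 : 0 < y1) (hy2 : 0 < y2) :
    (a * x1 + b * x2) * Real.log ((a * x1 + b * x2) / (a * y1 + b * y2))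
      ≤ a * (x1 * Real.log (x1 / y1)) + b * (x2 * Real.log (x2 / y2)) := by
  have hYpos : 0 < a * y1 + b * y2 := combo_pos ha hb hab hy1 hy2
  rcases hx1.eq_or_lt with h1 | h1 <;> rcases hx2.eq_or_lt with h2 | h2
  · simp [← h1, ← h2]
  · subst h1
    simp only [mul_zero, zero_add, zero_div, Real.log_zero, zero_mul, add_zero]
    rcases hb.eq_or_lt with hb0 | hb0
    · simp [← hb0]
    · have hlog : Real.log (b * x2 / (a * y1 + b * y2)) ≤ Real.log (x2 / y2) := by
        apply Real.log_le_log (by positivity)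
        rw [div_le_div_iff₀ hYpos hy2]
        nlinarith [mul_nonneg (mul_nonneg ha hy1.le) h2.le]
      have := mul_le_mul_of_nonneg_left hlog (by positivity : (0:ℝ) ≤ b * x2)
      nlinarith
  · subst h2
    simp only [mul_zero, add_zero, zero_div, Real.log_zero, zero_mul]
    rcases ha.eq_or_lt with ha0 | ha0
    · simp [← ha0]
    · have hlog : Real.log (a * x1 / (a * y1 + b * y2)) ≤ Real.log (x1 / y1) := by
        apply Real.log_le_log (by positivity)
        rw [div_le_div_iff₀ hYpos hy1]
        nlinarith [mul_nonneg (mul_nonneg hb hy2.le) h1.le]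
      have := mul_le_mul_of_nonneg_left hlog (by positivity : (0:ℝ) ≤ a * x1)
      nlinarith
  · exact kl_pt ha hb hab h1 h2 hy1 hy2

lemma genKL_combo {p : ℕ} {x1 x2 y1 y2 : Fin p → ℝ} {a b : ℝ}
    (ha : 0 ≤ a) (hb : 0 ≤ b) (hab : a + b = 1)
    (hx1 : ∀ i, 0 ≤ x1 i) (hx2 : ∀ i, 0 ≤ x2 i) (hy1 : ∀ i, 0 < y1 i) (hy2 : ∀ i, 0 < y2 i) :
    genKL (fun i => a * x1 i + b * x2 i) (fun i => a * y1 i + b * y2 i)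
      ≤ a * genKL x1 y1 + b * genKL x2 y2 := by
  unfold genKL
  rw [Finset.mul_sum, Finset.mul_sum, ← Finset.sum_add_distrib]
  refine Finset.sum_le_sum fun i _ => ?_
  have := kl_pt' ha hb hab (hx1 i) (hx2 i) (hy1 i) (hy2 i)
  nlinarith [this]

/-- For fixed cost matrix `M` and parameters `ε > 0`, `γ > 0`, the functional
`G (P, θ₁, θ₂)` is jointly convex in `(P, θ₁, θ₂)` on the domain of positive matrices
and positive vectors. -/
theorem unbalancedOT_jointly_convex (p q : ℕ) (M : Matrix (Fin p) (Fin q) ℝ)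
    (ε γ : ℝ) (hε : 0 < ε) (hγ : 0 < γ) :
    ConvexOn ℝ
      {x : Matrix (Fin p) (Fin q) ℝ × (Fin p → ℝ) × (Fin q → ℝ) |
        (∀ i j, 0 < x.1 i j) ∧ (∀ i, 0 < x.2.1 i) ∧ (∀ j, 0 < x.2.2 j)}
      (fun x => unbalancedOT M ε γ x.1 x.2.1 x.2.2) := by
  constructor
  · rintro x ⟨hx1, hx2, hx3⟩ y ⟨hy1, hy2, hy3⟩ a b ha hb hab
    refine ⟨fun i j => ?_, fun i => ?_, fun j => ?_⟩
    · simpa [Matrix.add_apply, Matrix.smul_apply, smul_eq_mul] using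
        combo_pos ha hb hab (hx1 i j) (hy1 i j)
    · simpa [smul_eq_mul] using combo_pos ha hb hab (hx2 i) (hy2 i)
    · simpa [smul_eq_mul] using combo_pos ha hb hab (hx3 j) (hy3 j)
  · rintro x ⟨hx1, hx2, hx3⟩ y ⟨hy1, hy2, hy3⟩ a b ha hb hab
    simp only [smul_eq_mul]
    show unbalancedOT M ε γ (a • x.1 + b • y.1) (a • x.2.1 + b • y.2.1) (a • x.2.2 + b • y.2.2)
      ≤ a * unbalancedOT M ε γ x.1 x.2.1 x.2.2 + b * unbalancedOT M ε γ y.1 y.2.1 y.2.2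
    unfold unbalancedOT
    have happ : ∀ i j, (a • x.1 + b • y.1) i j = a * x.1 i j + b * y.1 i j := by
      intro i j; simp [Matrix.add_apply, Matrix.smul_apply, smul_eq_mul]
    -- linear term
    have h1 : ∑ i, ∑ j, (a • x.1 + b • y.1) i j * M i j
        = a * (∑ i, ∑ j, x.1 i j * M i j) + b * (∑ i, ∑ j, y.1 i j * M i j) := by
      simp only [happ, Finset.mul_sum, ← Finset.sum_add_distrib]
      refine Finset.sum_congr rfl fun i _ => Finset.sum_congr rfl fun j _ => by ring
    -- entropy term
    have h2 : ∑ i, ∑ j, (a • x.1 + b • y.1) i j * (Real.log ((a • x.1 + b • y.1) i j) - 1)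
        ≤ a * (∑ i, ∑ j, x.1 i j * (Real.log (x.1 i j) - 1))
          + b * (∑ i, ∑ j, y.1 i j * (Real.log (y.1 i j) - 1)) := by
      simp only [happ, Finset.mul_sum, ← Finset.sum_add_distrib]
      refine Finset.sum_le_sum fun i _ => Finset.sum_le_sum fun j _ => ?_
      exact ent_pt ha hb hab (hx1 i j) (hy1 i j)
    -- row KL
    have h3 : genKL (fun i => ∑ j, (a • x.1 + b • y.1) i j) (a • x.2.1 + b • y.2.1)
        ≤ a * genKL (fun i => ∑ j, x.1 i j) x.2.1 + b * genKL (fun i => ∑ j, y.1 i j) y.2.1 := by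
      have e1 : (fun i => ∑ j, (a • x.1 + b • y.1) i j)
          = fun i => a * (∑ j, x.1 i j) + b * (∑ j, y.1 i j) := by
        funext i; simp [happ, Finset.mul_sum, Finset.sum_add_distrib]
      have e2 : (a • x.2.1 + b • y.2.1) = fun i => a * x.2.1 i + b * y.2.1 i := by
        funext i; simp [smul_eq_mul]
      rw [e1, e2]
      exact genKL_combo ha hb hab
        (fun i => Finset.sum_nonneg fun j _ => (hx1 i j).le)
        (fun i => Finset.sum_nonneg fun j _ => (hy1 i j).le) hx2 hy2
    -- column KL
    have h4 : genKL (fun j => ∑ i, (a • x.1 + b • y.1) i j) (a • x.2.2 + b • y.2.2)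
        ≤ a * genKL (fun j => ∑ i, x.1 i j) x.2.2 + b * genKL (fun j => ∑ i, y.1 i j) y.2.2 := by
      have e1 : (fun j => ∑ i, (a • x.1 + b • y.1) i j)
          = fun j => a * (∑ i, x.1 i j) + b * (∑ i, y.1 i j) := by
        funext j; simp [happ, Finset.mul_sum, Finset.sum_add_distrib]
      have e2 : (a • x.2.2 + b • y.2.2) = fun j => a * x.2.2 j + b * y.2.2 j := by
        funext j; simp [smul_eq_mul]
      rw [e1, e2]
      exact genKL_combo ha hb hab
        (fun j => Finset.sum_nonneg fun i _ => (hx1 i j).le)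
        (fun j => Finset.sum_nonneg fun i _ => (hy1 i j).le) hx3 hy3
    have h2' := mul_le_mul_of_nonneg_left h2 hε.le
    have h3' := mul_le_mul_of_nonneg_left h3 hγ.le
    have h4' := mul_le_mul_of_nonneg_left h4 hγ.le
    nlinarith [h1, h2', h3', h4']
end
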